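/- The curve γ is an N-Bertrand curve if and only if γ is a general helix. Precisely: there exist a smooth function λ : I → ℝ and a constant θ with cos θ ≠ 0 such that the curve β(s) = ∫N(s)ds + λ(s)N(s) is regular and has principal normal N̄ = εN (ε = ±1) with ⟨T, T̄⟩ = cos θ, if and only if the ratio τ/κ is constant on I; in that case λ(s) = c − s for some constant c and τ/κ = −tan θ. -/

import Mathlib

open scoped RealInnerProductSpace

noncomputable def cross3 (x y : EuclideanSpace ℝ (Fin 3)) : EuclideanSpace ℝ (Fin 3) :=
  WithLp.toLp 2 ![x 1 * y 2 - x 2 * y 1, x 2 * y 0 - x 0 * y 2, x 0 * y 1 - x 1 * y 0]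

/-- A real function with zero derivative on an open interval is constant there. -/
lemma helix_const_on_Ioo {a b : ℝ} {g : ℝ → ℝ}
    (hg : ∀ x ∈ Set.Ioo a b, HasDerivAt g 0 x) :
    ∀ x ∈ Set.Ioo a b, ∀ y ∈ Set.Ioo a b, g x = g y := by
  intro x hx y hy
  refine (convex_Ioo a b).is_const_of_fderivWithin_eq_zero
    (fun z hz => ((hg z hz).differentiableAt).differentiableWithinAt) ?_ hx hy
  intro z hz
  rw [fderivWithin_of_isOpen isOpen_Ioo hz, (hg z hz).hasFDerivAt.fderiv]
  ext t
  simp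

/-- γ is an N-Bertrand curve iff γ is a general helix (τ/κ constant);
moreover for any N-Bertrand mate data one has λ(s) = c - s and τ/κ = -tan θ. -/
theorem stmt_7 (a b : ℝ) (γ T N B : ℝ → EuclideanSpace ℝ (Fin 3)) (κ τ : ℝ → ℝ)
    (hγT : ∀ s ∈ Set.Ioo a b, HasDerivAt γ (T s) s)
    (hT1 : ∀ s ∈ Set.Ioo a b, ‖T s‖ = 1)
    (hN1 : ∀ s ∈ Set.Ioo a b, ‖N s‖ = 1)
    (hB1 : ∀ s ∈ Set.Ioo a b, ‖B s‖ = 1)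
    (hTN : ∀ s ∈ Set.Ioo a b, ⟪T s, N s⟫ = 0)
    (hTB : ∀ s ∈ Set.Ioo a b, ⟪T s, B s⟫ = 0)
    (hNB : ∀ s ∈ Set.Ioo a b, ⟪N s, B s⟫ = 0)
    (horient : ∀ s ∈ Set.Ioo a b, B s = cross3 (T s) (N s))
    (hκpos : ∀ s ∈ Set.Ioo a b, 0 < κ s)
    (hTder : ∀ s ∈ Set.Ioo a b, HasDerivAt T (κ s • N s) s)
    (hNder : ∀ s ∈ Set.Ioo a b, HasDerivAt N ((-κ s) • T s + τ s • B s) s)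
    (hBder : ∀ s ∈ Set.Ioo a b, HasDerivAt B ((-τ s) • N s) s)
    :
    ((∃ (lam lamd σ κb : ℝ → ℝ) (Nint β Tb Nb : ℝ → EuclideanSpace ℝ (Fin 3)) (θ : ℝ),
        Real.cos θ ≠ 0 ∧
        (∀ s ∈ Set.Ioo a b, HasDerivAt lam (lamd s) s) ∧
        (∀ s ∈ Set.Ioo a b, HasDerivAt Nint (N s) s) ∧
        (∀ s, β s = Nint s + lam s • N s) ∧
        (∀ s ∈ Set.Ioo a b, HasDerivAt β (σ s • Tb s) s) ∧
        (∀ s ∈ Set.Ioo a b, 0 < σ s) ∧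
        (∀ s ∈ Set.Ioo a b, ‖Tb s‖ = 1) ∧
        (∀ s ∈ Set.Ioo a b, HasDerivAt Tb ((σ s * κb s) • Nb s) s) ∧
        (∀ s ∈ Set.Ioo a b, 0 < κb s) ∧
        (∀ s ∈ Set.Ioo a b, ‖Nb s‖ = 1) ∧
        (∀ s ∈ Set.Ioo a b, Nb s = N s ∨ Nb s = -N s) ∧
        (∀ s ∈ Set.Ioo a b, ⟪T s, Tb s⟫ = Real.cos θ) ∧
        (∀ s ∈ Set.Ioo a b, ⟪B s, Tb s⟫ = Real.sin θ)) ↔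
      (∃ m : ℝ, ∀ s ∈ Set.Ioo a b, τ s / κ s = m)) ∧
    (∀ (lam lamd σ κb : ℝ → ℝ) (Nint β Tb Nb : ℝ → EuclideanSpace ℝ (Fin 3)) (θ : ℝ),
        Real.cos θ ≠ 0 →
        (∀ s ∈ Set.Ioo a b, HasDerivAt lam (lamd s) s) →
        (∀ s ∈ Set.Ioo a b, HasDerivAt Nint (N s) s) →
        (∀ s, β s = Nint s + lam s • N s) →
        (∀ s ∈ Set.Ioo a b, HasDerivAt β (σ s • Tb s) s) →
        (∀ s ∈ Set.Ioo a b, 0 < σ s) →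
        (∀ s ∈ Set.Ioo a b, ‖Tb s‖ = 1) →
        (∀ s ∈ Set.Ioo a b, HasDerivAt Tb ((σ s * κb s) • Nb s) s) →
        (∀ s ∈ Set.Ioo a b, 0 < κb s) →
        (∀ s ∈ Set.Ioo a b, ‖Nb s‖ = 1) →
        (∀ s ∈ Set.Ioo a b, Nb s = N s ∨ Nb s = -N s) →
        (∀ s ∈ Set.Ioo a b, ⟪T s, Tb s⟫ = Real.cos θ) →
        (∀ s ∈ Set.Ioo a b, ⟪B s, Tb s⟫ = Real.sin θ) →
        ((∃ c : ℝ, ∀ s ∈ Set.Ioo a b, lam s = c - s) ∧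
          ∀ s ∈ Set.Ioo a b, τ s / κ s = -Real.tan θ)) := by
  -- The main "only if" engine (this is the second conjunct).
  have key : ∀ (lam lamd σ κb : ℝ → ℝ) (Nint β Tb Nb : ℝ → EuclideanSpace ℝ (Fin 3)) (θ : ℝ),
      Real.cos θ ≠ 0 →
      (∀ s ∈ Set.Ioo a b, HasDerivAt lam (lamd s) s) →
      (∀ s ∈ Set.Ioo a b, HasDerivAt Nint (N s) s) →
      (∀ s, β s = Nint s + lam s • N s) →
      (∀ s ∈ Set.Ioo a b, HasDerivAt β (σ s • Tb s) s) →
      (∀ s ∈ Set.Ioo a b, 0 < σ s) →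
      (∀ s ∈ Set.Ioo a b, ‖Tb s‖ = 1) →
      (∀ s ∈ Set.Ioo a b, HasDerivAt Tb ((σ s * κb s) • Nb s) s) →
      (∀ s ∈ Set.Ioo a b, 0 < κb s) →
      (∀ s ∈ Set.Ioo a b, ‖Nb s‖ = 1) →
      (∀ s ∈ Set.Ioo a b, Nb s = N s ∨ Nb s = -N s) →
      (∀ s ∈ Set.Ioo a b, ⟪T s, Tb s⟫ = Real.cos θ) →
      (∀ s ∈ Set.Ioo a b, ⟪B s, Tb s⟫ = Real.sin θ) →
      ((∃ c : ℝ, ∀ s ∈ Set.Ioo a b, lam s = c - s) ∧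
        ∀ s ∈ Set.Ioo a b, τ s / κ s = -Real.tan θ) := by
    intro lam lamd σ κb Nint β Tb Nb θ hcos hlam hNint hβdef hβder hσ hTb1 hTbder hκb hNb1
      hNbN hTTb hBTb
    have hβfun : β = fun s => Nint s + lam s • N s := funext hβdef
    have key1 : ∀ s ∈ Set.Ioo a b,
        σ s • Tb s = N s + (lam s • ((-κ s) • T s + τ s • B s) + lamd s • N s) := by
      intro s hs
      have h1 : HasDerivAt β (N s + (lam s • ((-κ s) • T s + τ s • B s) + lamd s • N s)) s := by
        rw [hβfun]
        exact (hNint s hs).add ((hlam s hs).smul (hNder s hs))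
      exact (hβder s hs).unique h1
    have main : ∀ s ∈ Set.Ioo a b,
        lamd s = -1 ∧ τ s * Real.cos θ = -(Real.sin θ * κ s) := by
      intro s hs
      have hTT : ⟪T s, T s⟫ = 1 := by
        rw [real_inner_self_eq_norm_sq, hT1 s hs]; norm_num
      have hNN : ⟪N s, N s⟫ = 1 := by
        rw [real_inner_self_eq_norm_sq, hN1 s hs]; norm_num
      have hBB : ⟪B s, B s⟫ = 1 := by
        rw [real_inner_self_eq_norm_sq, hB1 s hs]; norm_num
      have hNT : ⟪N s, T s⟫ = 0 := by rw [real_inner_comm]; exact hTN s hs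
      have hBT : ⟪B s, T s⟫ = 0 := by rw [real_inner_comm]; exact hTB s hs
      have hBN : ⟪B s, N s⟫ = 0 := by rw [real_inner_comm]; exact hNB s hs
      have hv := key1 s hs
      have hTbT : ⟪Tb s, T s⟫ = Real.cos θ := by
        rw [real_inner_comm]; exact hTTb s hs
      have hTbB : ⟪Tb s, B s⟫ = Real.sin θ := by
        rw [real_inner_comm]; exact hBTb s hs
      -- Inner product with T
      have e1 : σ s * Real.cos θ = -(lam s * κ s) := by
        have h := congrArg (fun v => (⟪v, T s⟫ : ℝ)) hv
        simp only [inner_add_left, real_inner_smul_left, hNT, hTT, hBT, hTbT] at h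
        linarith [h]
      -- Inner product with B
      have e2 : σ s * Real.sin θ = lam s * τ s := by
        have h := congrArg (fun v => (⟪v, B s⟫ : ℝ)) hv
        simp only [inner_add_left, real_inner_smul_left, hNB s hs, hTB s hs, hBB,
          hTbB] at h
        linarith [h]
      -- Inner product with N
      have e3 : σ s * ⟪Tb s, N s⟫ = 1 + lamd s := by
        have h := congrArg (fun v => (⟪v, N s⟫ : ℝ)) hv
        simp only [inner_add_left, real_inner_smul_left, hNN, hTN s hs, hBN] at h
        linarith [h]
      -- ⟪N, Tb⟫ = 0 by differentiating the constant ⟪T, Tb⟫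
      have hTNb : ⟪T s, Nb s⟫ = 0 := by
        rcases hNbN s hs with h | h
        · rw [h]; exact hTN s hs
        · rw [h, inner_neg_right, hTN s hs, neg_zero]
      have hder : HasDerivAt (fun t => (⟪T t, Tb t⟫ : ℝ))
          (⟪T s, (σ s * κb s) • Nb s⟫ + ⟪κ s • N s, Tb s⟫) s :=
        HasDerivAt.inner ℝ (hTder s hs) (hTbder s hs)
      have hconst : HasDerivAt (fun t => (⟪T t, Tb t⟫ : ℝ)) 0 s := by
        have hev : (fun t => (⟪T t, Tb t⟫ : ℝ)) =ᶠ[nhds s] fun _ => Real.cos θ :=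
          Filter.eventuallyEq_of_mem (isOpen_Ioo.mem_nhds hs) (fun t ht => hTTb t ht)
        exact (hasDerivAt_const s (Real.cos θ)).congr_of_eventuallyEq hev
      have hz := hder.unique hconst
      rw [real_inner_smul_right, real_inner_smul_left, hTNb, mul_zero, zero_add] at hz
      have hNTb : ⟪N s, Tb s⟫ = 0 :=
        (mul_eq_zero.mp hz).resolve_left (hκpos s hs).ne'
      have hTbN : ⟪Tb s, N s⟫ = 0 := by rw [real_inner_comm]; exact hNTb
      have hlamd : lamd s = -1 := by
        rw [hTbN, mul_zero] at e3; linarith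
      refine ⟨hlamd, ?_⟩
      have hlamne : lam s ≠ 0 := by
        intro h0
        rw [h0, zero_mul, neg_zero] at e1
        rcases mul_eq_zero.mp e1 with h | h
        · exact (hσ s hs).ne' h
        · exact hcos h
      have hmul : lam s * (τ s * Real.cos θ) = lam s * (-(Real.sin θ * κ s)) := by
        linear_combination Real.sin θ * e1 - Real.cos θ * e2
      exact mul_left_cancel₀ hlamne hmul
    constructor
    · rcases Set.eq_empty_or_nonempty (Set.Ioo a b) with he | ⟨c₀, hc₀⟩
      · exact ⟨0, by rw [he]; intro s hs; exact absurd hs (by simp)⟩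
      · refine ⟨lam c₀ + c₀, fun s hs => ?_⟩
        have hg : ∀ x ∈ Set.Ioo a b, HasDerivAt (fun t => lam t + t) 0 x := by
          intro x hx
          have := (hlam x hx).add (hasDerivAt_id x)
          rwa [(main x hx).1, neg_add_cancel] at this
        have := helix_const_on_Ioo hg s hs c₀ hc₀
        linarith
    · intro s hs
      have h2 := (main s hs).2
      have hκ := (hκpos s hs).ne'
      rw [Real.tan_eq_sin_div_cos]
      field_simp
      linarith
  refine ⟨?_, key⟩
  constructor
  · rintro ⟨lam, lamd, σ, κb, Nint, β, Tb, Nb, θ, hcos, h1, h2, h3, h4, h5, h6, h7, h8, h9,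
      h10, h11, h12⟩
    exact ⟨-Real.tan θ, (key lam lamd σ κb Nint β Tb Nb θ hcos h1 h2 h3 h4 h5 h6 h7 h8 h9
      h10 h11 h12).2⟩
  · rintro ⟨m, hm⟩
    by_cases hab : a < b
    · -- construction of the mate
      set c₀ := (a + b) / 2 with hc₀def
      have hc₀ : c₀ ∈ Set.Ioo a b := by constructor <;> (simp [hc₀def]; linarith)
      set m' := Real.sqrt (1 + m ^ 2) with hm'def
      have hm'pos : 0 < m' := Real.sqrt_pos.2 (by positivity)
      have hm'ne : m' ≠ 0 := hm'pos.ne'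
      have hm'2 : m' ^ 2 = 1 + m ^ 2 := Real.sq_sqrt (by positivity)
      set θ := Real.arctan (-m) with hθdef
      have hcos : Real.cos θ = 1 / m' := by
        rw [hθdef, Real.cos_arctan, neg_pow]; norm_num [hm'def]
      have hsin : Real.sin θ = -m / m' := by
        rw [hθdef, Real.sin_arctan, neg_pow]; norm_num [hm'def]
      have hτ : ∀ s ∈ Set.Ioo a b, τ s = m * κ s := by
        intro s hs
        have h := hm s hs
        have hκ := (hκpos s hs).ne'
        field_simp at h
        linarith
      have hNcont : ∀ t ∈ Set.Ioo a b, ContinuousAt N t :=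
        fun t ht => (hNder t ht).continuousAt
      have hNintder : ∀ s ∈ Set.Ioo a b,
          HasDerivAt (fun x => ∫ t in c₀..x, N t) (N s) s := by
        intro s hs
        apply intervalIntegral.integral_hasDerivAt_right
        · apply ContinuousOn.intervalIntegrable
          intro t ht
          have hsub : Set.uIcc c₀ s ⊆ Set.Ioo a b :=
            (Set.ordConnected_Ioo).uIcc_subset hc₀ hs
          exact (hNcont t (hsub ht)).continuousWithinAt
        · exact ContinuousAt.stronglyMeasurableAtFilter isOpen_Ioo hNcont s hs
        · exact hNcont s hs
      refine ⟨fun s => a - s, fun _ => -1, fun s => (s - a) * (κ s * m'),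
        fun s => (s - a)⁻¹, fun x => ∫ t in c₀..x, N t,
        fun s => (∫ t in c₀..s, N t) + (a - s) • N s,
        fun s => Real.cos θ • T s + Real.sin θ • B s, N, θ,
        by rw [hcos]; positivity, fun s hs => (hasDerivAt_id s).const_sub a,
        hNintder, fun s => rfl, ?_, ?_, ?_, ?_, ?_, hN1, fun s hs => Or.inl rfl, ?_, ?_⟩
      · -- β' = σ • Tb
        intro s hs
        have hd := (hNintder s hs).add
          (((hasDerivAt_id s).const_sub a).smul (hNder s hs))
        refine hd.congr_deriv ?_
        symm
        rw [hcos, hsin, hτ s hs, id_eq]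
        match_scalars <;> field_simp <;> ring
      · -- σ > 0
        intro s hs
        have := hs.1
        have := hκpos s hs
        have : 0 < s - a := by linarith [hs.1]
        positivity
      · -- ‖Tb‖ = 1
        intro s hs
        have hTT : ⟪T s, T s⟫ = 1 := by
          rw [real_inner_self_eq_norm_sq, hT1 s hs]; norm_num
        have hBB : ⟪B s, B s⟫ = 1 := by
          rw [real_inner_self_eq_norm_sq, hB1 s hs]; norm_num
        have hBT : ⟪B s, T s⟫ = 0 := by rw [real_inner_comm]; exact hTB s hs
        have hsq : ‖Real.cos θ • T s + Real.sin θ • B s‖ ^ 2 = 1 := by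
          rw [← real_inner_self_eq_norm_sq]
          simp only [inner_add_left, inner_add_right, real_inner_smul_left,
            real_inner_smul_right, hTT, hBB, hTB s hs, hBT]
          linear_combination Real.sin_sq_add_cos_sq θ
        calc ‖Real.cos θ • T s + Real.sin θ • B s‖
            = Real.sqrt (‖Real.cos θ • T s + Real.sin θ • B s‖ ^ 2) :=
              (Real.sqrt_sq (norm_nonneg _)).symm
          _ = 1 := by rw [hsq, Real.sqrt_one]
      · -- Tb' = (σ κb) • Nb
        intro s hs
        have hd := ((hTder s hs).const_smul (Real.cos θ)).add
          ((hBder s hs).const_smul (Real.sin θ))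
        refine hd.congr_deriv ?_
        symm
        have hsa : s - a ≠ 0 := by have := hs.1; intro h; linarith [hs.1]
        rw [hcos, hsin, hτ s hs]
        match_scalars
        field_simp
        linear_combination κ s * hm'2
      · -- κb > 0
        intro s hs
        have : 0 < s - a := by linarith [hs.1]
        positivity
      · -- ⟪T, Tb⟫ = cos θ
        intro s hs
        have hTT : ⟪T s, T s⟫ = 1 := by
          rw [real_inner_self_eq_norm_sq, hT1 s hs]; norm_num
        simp only [inner_add_right, real_inner_smul_right, hTT, hTB s hs]
        ring
      · -- ⟪B, Tb⟫ = sin θ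
        intro s hs
        have hBB : ⟪B s, B s⟫ = 1 := by
          rw [real_inner_self_eq_norm_sq, hB1 s hs]; norm_num
        have hBT : ⟪B s, T s⟫ = 0 := by rw [real_inner_comm]; exact hTB s hs
        simp only [inner_add_right, real_inner_smul_right, hBB, hBT]
        ring
    · -- empty interval: trivial witnesses
      have he : Set.Ioo a b = ∅ := Set.Ioo_eq_empty hab
      refine ⟨0, 0, fun _ => 1, fun _ => 1, 0, fun s => 0 + (0 : ℝ) • N s, T, N, 0,
        by norm_num, ?_, ?_, fun s => rfl, ?_, ?_, ?_, ?_, ?_, ?_, ?_, ?_, ?_⟩ <;>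
        · intro s hs
          rw [he] at hs
          exact absurd hs (Set.notMem_empty s)
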